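/- Let t > 0, let (ν_s)_{s∈[0,t]} be a weakly continuous family of finite Borel measures on ℝ^d, and let n : [0,t] × ℝ^d → [0,∞) be bounded and continuous and such that for every s ∈ [0,t] and every Borel set A ⊆ ℝ^d one has ∫₀^s ν_r(A) dr = ∫_A n(s,x) dx. Then for every Borel measurable f : ℝ^d → [0,1], ∫₀^t ( ∫_{ℝ^d} f(x)² e^{−2 n(s,x)} ν_s(dx) ) ds = (1/2) ∫_{ℝ^d} f(x)² (1 − e^{−2 n(t,x)}) dx, and in particular this quantity is at most (1/2) times the Lebesgue measure of the support of f when that support is bounded. -/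

import Mathlib

open MeasureTheory Filter Topology ProbabilityTheory
open scoped NNReal ENNReal

lemma aux_lintegral_continuous {X : Type*} [MeasurableSpace X] [TopologicalSpace X]
    [OpensMeasurableSpace X] (f : BoundedContinuousFunction X ℝ≥0) :
    Continuous fun μ : FiniteMeasure X => ∫⁻ x, (f x : ℝ≥0∞) ∂(μ : Measure X) := by
  rw [continuous_iff_continuousAt]
  intro μ0
  exact (FiniteMeasure.tendsto_iff_forall_lintegral_tendsto.mp tendsto_id) f

lemma aux_eval_measurable {X : Type*} [MeasurableSpace X] [PseudoEMetricSpace X]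
    [OpensMeasurableSpace X] [BorelSpace X]
    (ν : ℝ → FiniteMeasure X) (hν : Continuous ν) :
    ∀ A : Set X, MeasurableSet A → Measurable (fun r => (ν r : Measure X) A) := by
  have h_closed : ∀ F : Set X, IsClosed F → Measurable fun r => (ν r : Measure X) F := by
    intro F hF
    have δpos : ∀ k : ℕ, (0:ℝ) < 1/(k+1) := fun k => by positivity
    have δlim : Tendsto (fun k : ℕ => 1/((k:ℝ)+1)) atTop (𝓝 0) :=
      tendsto_one_div_add_atTop_nhds_zero_nat
    have key : ∀ r, Tendsto
        (fun k => ∫⁻ x, (thickenedIndicator (δpos k) F x : ℝ≥0∞) ∂(ν r : Measure X))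
        atTop (𝓝 ((ν r : Measure X) F)) := fun r =>
      tendsto_lintegral_thickenedIndicator_of_isClosed (ν r : Measure X) hF δpos δlim
    apply ENNReal.measurable_of_tendsto'
      (f := fun k r => ∫⁻ x, (thickenedIndicator (δpos k) F x : ℝ≥0∞) ∂(ν r : Measure X))
      atTop
    · intro k
      exact ((aux_lintegral_continuous (thickenedIndicator (δpos k) F)).comp hν).measurable
    · rw [tendsto_pi_nhds]; exact key
  have h_eq : ‹MeasurableSpace X› = MeasurableSpace.generateFrom {s : Set X | IsClosed s} :=
    BorelSpace.measurable_eq.trans borel_eq_generateFrom_isClosed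
  refine MeasurableSpace.induction_on_inter
    (C := fun A _ => Measurable fun r => (ν r : Measure X) A) h_eq
    (fun s hs u hu _ => hs.inter hu) (by simpa using measurable_const) h_closed ?_ ?_
  · intro A hA hmeas
    have : ∀ r, (ν r : Measure X) Aᶜ = (ν r : Measure X) Set.univ - (ν r : Measure X) A :=
      fun r => measure_compl hA (measure_ne_top _ _)
    simp_rw [this]
    exact (h_closed _ isClosed_univ).sub hmeas
  · intro g hdisj hg hmeas
    have : ∀ r, (ν r : Measure X) (⋃ i, g i) = ∑' i, (ν r : Measure X) (g i) :=
      fun r => measure_iUnion hdisj hg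
    simp_rw [this]
    exact Measurable.ennreal_tsum hmeas
lemma aux_exp1 (u v : ℝ) (_h : u ≤ v) :
    Real.exp (-2*v) * (v-u) ≤ (Real.exp (-2*u) - Real.exp (-2*v))/2 := by
  have h1 : Real.exp (-2*u) = Real.exp (-2*v) * Real.exp (2*(v-u)) := by
    rw [← Real.exp_add]; ring_nf
  have h2 : 2*(v-u) + 1 ≤ Real.exp (2*(v-u)) := Real.add_one_le_exp _
  nlinarith [Real.exp_pos (-2*v)]

lemma aux_exp2 (u v : ℝ) (_h : u ≤ v) :
    (Real.exp (-2*u) - Real.exp (-2*v))/2 ≤ Real.exp (-2*u) * (v-u) := by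
  have h1 : Real.exp (-2*v) = Real.exp (-2*u) * Real.exp (-2*(v-u)) := by
    rw [← Real.exp_add]; ring_nf
  have h2 : -2*(v-u) + 1 ≤ Real.exp (-2*(v-u)) := Real.add_one_le_exp _
  nlinarith [Real.exp_pos (-2*u)]

lemma aux_exp3 (u v : ℝ) (hu : 0 ≤ u) (h : u ≤ v) :
    Real.exp (-2*u) - Real.exp (-2*v) ≤ 2*(v-u) := by
  have h1 := aux_exp2 u v h
  have h2 : Real.exp (-2*u) ≤ 1 := Real.exp_le_one_iff.mpr (by linarith)
  nlinarith [Real.exp_pos (-2*u)]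
set_option maxHeartbeats 1000000 in

theorem occupation_density_quadratic_identity (d : ℕ) (t : ℝ) (ht : 0 < t)
    (ν : ℝ → FiniteMeasure (EuclideanSpace ℝ (Fin d)))
    (hν : ContinuousOn ν (Set.Icc 0 t))
    (n : ℝ → EuclideanSpace ℝ (Fin d) → ℝ)
    (hn_nonneg : ∀ s x, 0 ≤ n s x)
    (hn_bdd : ∃ K : ℝ, ∀ s x, n s x ≤ K)
    (hn_cont : ContinuousOn (fun p : ℝ × EuclideanSpace ℝ (Fin d) => n p.1 p.2)
      (Set.Icc 0 t ×ˢ Set.univ))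
    (hdens : ∀ s ∈ Set.Icc (0:ℝ) t, ∀ A : Set (EuclideanSpace ℝ (Fin d)), MeasurableSet A →
      (∫ r in (0:ℝ)..s, ((ν r : Measure (EuclideanSpace ℝ (Fin d))) A).toReal)
        = ∫ x in A, n s x)
    (f : EuclideanSpace ℝ (Fin d) → ℝ)
    (hf_meas : Measurable f) (hf0 : ∀ x, 0 ≤ f x) (hf1 : ∀ x, f x ≤ 1) :
    (∫ s in (0:ℝ)..t,
        ∫ x, (f x)^2 * Real.exp (-2 * n s x) ∂(ν s : Measure (EuclideanSpace ℝ (Fin d))))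
      = (1/2) * ∫ x, (f x)^2 * (1 - Real.exp (-2 * n t x)) ∧
    (Bornology.IsBounded (Function.support f) →
      (∫ s in (0:ℝ)..t,
          ∫ x, (f x)^2 * Real.exp (-2 * n s x) ∂(ν s : Measure (EuclideanSpace ℝ (Fin d))))
        ≤ (1/2) * (volume (Function.support f)).toReal) := by
  obtain ⟨K, hK⟩ := hn_bdd
  have hK0 : 0 ≤ K := le_trans (hn_nonneg 0 (Classical.arbitrary _)) (hK 0 _)
  -- the clamp map
  set c : ℝ → ℝ := fun s => min (max s 0) t with hc_def
  have hc_cont : Continuous c := (continuous_id.max continuous_const).min continuous_const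
  have hc_mem : ∀ s, c s ∈ Set.Icc (0:ℝ) t :=
    fun s => ⟨le_min (le_max_right _ _) ht.le, min_le_right _ _⟩
  have hc_id : ∀ s ∈ Set.Icc (0:ℝ) t, c s = s := by
    intro s hs; simp only [hc_def]; rw [max_eq_left hs.1, min_eq_left hs.2]
  -- the clamped measure family
  set ν' : ℝ → FiniteMeasure (EuclideanSpace ℝ (Fin d)) := fun s => ν (c s) with hν'_def
  have hν' : Continuous ν' := hν.comp_continuous hc_cont hc_mem
  have heval := aux_eval_measurable ν' hν'
  have hκmeas : Measurable (fun s => (ν' s : Measure (EuclideanSpace ℝ (Fin d)))) :=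
    Measure.measurable_of_measurable_coe _ (fun A hA => heval A hA)
  -- uniform mass bound
  obtain ⟨Mr, hMr⟩ : ∃ Mr : ℝ≥0,
      ∀ s, ((ν' s : Measure (EuclideanSpace ℝ (Fin d))) Set.univ) ≤ (Mr : ℝ≥0∞) := by
    obtain ⟨z, hz, hzmax⟩ := isCompact_Icc.exists_isMaxOn (α := ℝ≥0) ⟨0, le_refl (0:ℝ), ht.le⟩
      (FiniteMeasure.continuous_mass.comp_continuousOn hν)
    refine ⟨(ν z).mass, fun s => ?_⟩
    have h1 : (ν' s).mass ≤ (ν z).mass := hzmax (hc_mem s)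
    have h2 : ((ν' s : Measure (EuclideanSpace ℝ (Fin d))) Set.univ) = ((ν' s).mass : ℝ≥0∞) :=
      (FiniteMeasure.ennreal_mass).symm
    rw [h2]; exact_mod_cast h1
  -- continuity of n in x, jointly after clamping
  have hjoint : Continuous (fun p : ℝ × EuclideanSpace ℝ (Fin d) => n (c p.1) p.2) :=
    hn_cont.comp_continuous ((hc_cont.comp continuous_fst).prodMk continuous_snd)
      (fun p => ⟨hc_mem _, trivial⟩)
  have hnx : ∀ s, Continuous (fun x => n (c s) x) :=
    fun s => hjoint.comp (continuous_const.prodMk continuous_id)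
  have hnx' : ∀ s, 0 ≤ s → s ≤ t → Continuous (fun x => n s x) := by
    intro s h0 h1
    have := hnx s
    rwa [hc_id s ⟨h0, h1⟩] at this
  -- transfer hdens to ν'
  have hdens' : ∀ s ∈ Set.Icc (0:ℝ) t, ∀ A : Set (EuclideanSpace ℝ (Fin d)), MeasurableSet A →
      (∫ r in (0:ℝ)..s, ((ν' r : Measure (EuclideanSpace ℝ (Fin d))) A).toReal)
        = ∫ x in A, n s x := by
    intro s hs A hA
    rw [← hdens s hs A hA]
    apply intervalIntegral.integral_congr
    intro r hr
    rw [Set.uIcc_of_le hs.1] at hr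
    simp only [hν'_def, hc_id r ⟨hr.1, le_trans hr.2 hs.2⟩]
  -- integrability of evaluations
  have hInt : ∀ A : Set (EuclideanSpace ℝ (Fin d)), MeasurableSet A → ∀ a b : ℝ,
      IntegrableOn (fun r => ((ν' r : Measure (EuclideanSpace ℝ (Fin d))) A).toReal)
        (Set.Ioc a b) volume := by
    intro A hA a b
    apply Measure.integrableOn_of_bounded (M := (Mr : ℝ))
    · exact (measure_Ioc_lt_top).ne
    · exact ((heval A hA).ennreal_toReal).aestronglyMeasurable
    · apply ae_of_all
      intro r
      rw [Real.norm_eq_abs, abs_of_nonneg ENNReal.toReal_nonneg]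
      have h1 : (ν' r : Measure (EuclideanSpace ℝ (Fin d))) A ≤ (Mr : ℝ≥0∞) :=
        le_trans (measure_mono (Set.subset_univ A)) (hMr r)
      have := ENNReal.toReal_mono (by simp) h1
      simpa using this
  have hIntervalInt : ∀ A : Set (EuclideanSpace ℝ (Fin d)), MeasurableSet A → ∀ a b : ℝ, a ≤ b →
      IntervalIntegrable (fun r => ((ν' r : Measure (EuclideanSpace ℝ (Fin d))) A).toReal)
        volume a b := by
    intro A hA a b hab
    rw [intervalIntegrable_iff, Set.uIoc_of_le hab]
    exact hInt A hA a b
  -- two-endpoint density formula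
  have hd2 : ∀ a b : ℝ, 0 ≤ a → a ≤ b → b ≤ t →
      ∀ A : Set (EuclideanSpace ℝ (Fin d)), MeasurableSet A →
      (∫ r in Set.Ioc a b, ((ν' r : Measure (EuclideanSpace ℝ (Fin d))) A).toReal)
        = (∫ x in A, n b x) - ∫ x in A, n a x := by
    intro a b ha hab hbt A hA
    have h1 := hdens' a ⟨ha, le_trans hab hbt⟩ A hA
    have h2 := hdens' b ⟨le_trans ha hab, hbt⟩ A hA
    have hadd := intervalIntegral.integral_add_adjacent_intervals
      (hIntervalInt A hA 0 a ha) (hIntervalInt A hA a b hab)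
    rw [h1, h2] at hadd
    rw [← intervalIntegral.integral_of_le hab]
    linarith
  -- integrability on balls
  have hIntBall : ∀ s, 0 ≤ s → s ≤ t → ∀ (x0 : EuclideanSpace ℝ (Fin d)) (r : ℝ),
      IntegrableOn (fun x => n s x) (Metric.ball x0 r) volume := by
    intro s h0 h1 x0 r
    exact (((hnx' s h0 h1).continuousOn).integrableOn_compact
      (isCompact_closedBall x0 r)).mono_set Metric.ball_subset_closedBall
  -- a continuous function positive at a point dominates a constant on a small ball
  have hball_pos : ∀ (g : EuclideanSpace ℝ (Fin d) → ℝ), Continuous g → ∀ x0, 0 < g x0 →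
      ∃ r : ℝ, 0 < r ∧ ∀ y ∈ Metric.ball x0 r, g x0 / 2 ≤ g y := by
    intro g hg x0 hx0
    have hopen : IsOpen {y | g x0 / 2 < g y} := isOpen_lt continuous_const hg
    have hx0mem : x0 ∈ {y | g x0 / 2 < g y} := by simp; linarith
    obtain ⟨r, hr, hsub⟩ := Metric.isOpen_iff.mp hopen x0 hx0mem
    exact ⟨r, hr, fun y hy => (hsub hy).le⟩
  have hlow_ball : ∀ (g : EuclideanSpace ℝ (Fin d) → ℝ) (x0 : EuclideanSpace ℝ (Fin d)) (r : ℝ),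
      IntegrableOn g (Metric.ball x0 r) volume →
      (∀ y ∈ Metric.ball x0 r, g x0 / 2 ≤ g y) →
      g x0 / 2 * (volume (Metric.ball x0 r)).toReal ≤ ∫ y in Metric.ball x0 r, g y := by
    intro g x0 r hint hge
    have h := setIntegral_mono_on
      (integrableOn_const measure_ball_lt_top.ne) hint
      measurableSet_ball hge
    rw [setIntegral_const, smul_eq_mul, measureReal_def] at h
    linarith
  -- pointwise monotonicity of n in time
  have hmono_n : ∀ a b : ℝ, 0 ≤ a → a ≤ b → b ≤ t → ∀ x, n a x ≤ n b x := by
    intro a b ha hab hbt x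
    by_contra hcon
    push_neg at hcon
    set g : EuclideanSpace ℝ (Fin d) → ℝ := fun y => n a y - n b y with hg_def
    have hgc : Continuous g := (hnx' a ha (hab.trans hbt)).sub (hnx' b (ha.trans hab) hbt)
    have hgx : 0 < g x := by simp only [hg_def]; linarith
    obtain ⟨r, hr, hge⟩ := hball_pos g hgc x hgx
    have hvol : 0 < (volume (Metric.ball x r)).toReal :=
      ENNReal.toReal_pos (Metric.measure_ball_pos volume x hr).ne' measure_ball_lt_top.ne
    have hia := hIntBall a ha (hab.trans hbt) x r
    have hib := hIntBall b (ha.trans hab) hbt x r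
    have hIoc := hd2 a b ha hab hbt (Metric.ball x r) measurableSet_ball
    have hnn : (0:ℝ) ≤ ∫ s in Set.Ioc a b,
        ((ν' s : Measure (EuclideanSpace ℝ (Fin d))) (Metric.ball x r)).toReal :=
      setIntegral_nonneg measurableSet_Ioc (fun _ _ => ENNReal.toReal_nonneg)
    have hsub : ∫ y in Metric.ball x r, g y
        = (∫ y in Metric.ball x r, n a y) - ∫ y in Metric.ball x r, n b y :=
      integral_sub hia hib
    have hlow := hlow_ball g x r (hia.sub hib) hge
    nlinarith
  -- n 0 = 0
  have hn0 : ∀ x, n 0 x = 0 := by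
    intro x
    by_contra h0
    have hpos : 0 < n 0 x := lt_of_le_of_ne (hn_nonneg 0 x) (Ne.symm h0)
    have hgc : Continuous (fun y => n 0 y) := hnx' 0 le_rfl ht.le
    obtain ⟨r, hr, hge⟩ := hball_pos _ hgc x hpos
    have hvol : 0 < (volume (Metric.ball x r)).toReal :=
      ENNReal.toReal_pos (Metric.measure_ball_pos volume x hr).ne' measure_ball_lt_top.ne
    have h := hdens 0 ⟨le_rfl, ht.le⟩ (Metric.ball x r) measurableSet_ball
    rw [intervalIntegral.integral_same] at h
    have hlow := hlow_ball _ x r (hIntBall 0 le_rfl ht.le x r) hge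
    rw [← h] at hlow
    nlinarith
  -- finiteness of the lintegral of n s
  have hn_lt : ∀ s, 0 ≤ s → s ≤ t →
      (∫⁻ x, ENNReal.ofReal (n s x)) < ⊤ := by
    intro s h0 h1
    set Fk : ℕ → EuclideanSpace ℝ (Fin d) → ℝ≥0∞ :=
      fun k => (Metric.ball (0 : EuclideanSpace ℝ (Fin d)) k).indicator
        (fun x => ENNReal.ofReal (n s x)) with hFk_def
    have hFk_meas : ∀ k : ℕ, Measurable (Fk k) :=
      fun k => ((hnx' s h0 h1).measurable.ennreal_ofReal).indicator measurableSet_ball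
    have hFk_mono : Monotone Fk := fun i j hij =>
      Set.indicator_le_indicator_of_subset
        (Metric.ball_subset_ball (by exact_mod_cast hij)) (fun _ => zero_le)
    have hFk_sup : ∀ x, (⨆ k : ℕ, Fk k x) = ENNReal.ofReal (n s x) := by
      intro x
      refine le_antisymm (iSup_le fun k => ?_) ?_
      · exact Set.indicator_le_self' (fun _ _ => zero_le) x
      · obtain ⟨k, hk⟩ := exists_nat_gt (dist x (0 : EuclideanSpace ℝ (Fin d)))
        refine le_iSup_of_le k ?_
        have : x ∈ Metric.ball (0 : EuclideanSpace ℝ (Fin d)) k := Metric.mem_ball.mpr hk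
        simp [hFk_def, Set.indicator_of_mem this]
    have hcalc : (∫⁻ x, ENNReal.ofReal (n s x)) = ⨆ k : ℕ, ∫⁻ x, Fk k x := by
      rw [← lintegral_iSup hFk_meas hFk_mono]
      exact lintegral_congr fun x => (hFk_sup x).symm
    rw [hcalc]
    refine lt_of_le_of_lt (iSup_le fun k => ?_) (ENNReal.ofReal_lt_top (r := (Mr : ℝ) * t))
    have hIb := hIntBall s h0 h1 0 k
    rw [hFk_def]
    rw [lintegral_indicator measurableSet_ball]
    rw [← ofReal_integral_eq_lintegral_ofReal hIb (ae_of_all _ (fun y => hn_nonneg s y))]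
    apply ENNReal.ofReal_le_ofReal
    rw [← hdens' s ⟨h0, h1⟩ (Metric.ball 0 k) measurableSet_ball]
    have hbd := intervalIntegral.norm_integral_le_of_norm_le_const (C := (Mr : ℝ))
      (f := fun r => ((ν' r : Measure (EuclideanSpace ℝ (Fin d))) (Metric.ball 0 k)).toReal)
      (a := 0) (b := s) ?_
    · calc _ ≤ |∫ r in (0:ℝ)..s,
            ((ν' r : Measure (EuclideanSpace ℝ (Fin d))) (Metric.ball 0 k)).toReal| :=
          le_abs_self _
        _ ≤ (Mr : ℝ) * |s - 0| := hbd
        _ ≤ (Mr : ℝ) * t := by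
          rw [sub_zero, abs_of_nonneg h0]
          exact mul_le_mul_of_nonneg_left h1 Mr.coe_nonneg
    · intro r _
      rw [Real.norm_eq_abs, abs_of_nonneg ENNReal.toReal_nonneg]
      have h1' : ((ν' r : Measure (EuclideanSpace ℝ (Fin d))) (Metric.ball 0 k)) ≤ (Mr : ℝ≥0∞) :=
        le_trans (measure_mono (Set.subset_univ _)) (hMr r)
      simpa using ENNReal.toReal_mono (by simp) h1'
  have hn_int : ∀ s, 0 ≤ s → s ≤ t → Integrable (fun x => n s x) volume := by
    intro s h0 h1
    refine ⟨(hnx' s h0 h1).aestronglyMeasurable, ?_⟩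
    rw [hasFiniteIntegral_iff_ofReal (ae_of_all _ (hn_nonneg s))]
    exact hn_lt s h0 h1
  -- the key identity: time-integrals against the family equal space integrals against
  -- the density increment
  have lemA : ∀ a b : ℝ, 0 ≤ a → a ≤ b → b ≤ t →
      ∀ g : EuclideanSpace ℝ (Fin d) → ℝ≥0∞, Measurable g →
      (∫⁻ r in Set.Ioc a b, ∫⁻ x, g x ∂(ν' r : Measure (EuclideanSpace ℝ (Fin d))))
        = ∫⁻ x, (ENNReal.ofReal (n b x - n a x)) * g x := by
    intro a b ha hab hbt g hg
    have hmeas_dens : Measurable (fun x => ENNReal.ofReal (n b x - n a x)) :=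
      (((hnx' b (ha.trans hab) hbt).sub (hnx' a ha (hab.trans hbt))).measurable).ennreal_ofReal
    have hbind : (volume.restrict (Set.Ioc a b)).bind
          (fun r => (ν' r : Measure (EuclideanSpace ℝ (Fin d))))
        = volume.withDensity (fun x => ENNReal.ofReal (n b x - n a x)) := by
      ext A hA
      rw [Measure.bind_apply hA hκmeas.aemeasurable]
      calc (∫⁻ r in Set.Ioc a b, (ν' r : Measure (EuclideanSpace ℝ (Fin d))) A)
          = ∫⁻ r in Set.Ioc a b,
              ENNReal.ofReal (((ν' r : Measure (EuclideanSpace ℝ (Fin d))) A).toReal) :=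
            lintegral_congr fun r => (ENNReal.ofReal_toReal (measure_ne_top _ _)).symm
        _ = ENNReal.ofReal (∫ r in Set.Ioc a b,
              ((ν' r : Measure (EuclideanSpace ℝ (Fin d))) A).toReal) :=
            (ofReal_integral_eq_lintegral_ofReal (hInt A hA a b)
              (ae_of_all _ fun r => ENNReal.toReal_nonneg)).symm
        _ = ENNReal.ofReal (∫ x in A, (n b x - n a x)) := by
            rw [hd2 a b ha hab hbt A hA,
              ← integral_sub ((hn_int b (ha.trans hab) hbt).integrableOn)
                ((hn_int a ha (hab.trans hbt)).integrableOn)]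
        _ = ∫⁻ x in A, ENNReal.ofReal (n b x - n a x) :=
            ofReal_integral_eq_lintegral_ofReal
              (((hn_int b (ha.trans hab) hbt).integrableOn).sub
                ((hn_int a ha (hab.trans hbt)).integrableOn))
              (ae_of_all _ fun x => sub_nonneg.mpr (hmono_n a b ha hab hbt x))
        _ = (volume.withDensity (fun x => ENNReal.ofReal (n b x - n a x))) A :=
            (withDensity_apply _ hA).symm
    calc (∫⁻ r in Set.Ioc a b, ∫⁻ x, g x ∂(ν' r : Measure (EuclideanSpace ℝ (Fin d))))
        = ∫⁻ x, g x ∂((volume.restrict (Set.Ioc a b)).bind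
            (fun r => (ν' r : Measure (EuclideanSpace ℝ (Fin d))))) :=
          (Measure.lintegral_bind hκmeas.aemeasurable hg.aemeasurable).symm
      _ = ∫⁻ x, g x ∂(volume.withDensity (fun x => ENNReal.ofReal (n b x - n a x))) := by
          rw [hbind]
      _ = ∫⁻ x, (ENNReal.ofReal (n b x - n a x)) * g x := by
          rw [lintegral_withDensity_eq_lintegral_mul _ hmeas_dens hg]
          rfl
  -- the kernel
  set kap : ProbabilityTheory.Kernel ℝ (EuclideanSpace ℝ (Fin d)) :=
    ⟨fun s => (ν' s : Measure (EuclideanSpace ℝ (Fin d))), hκmeas⟩ with hkap_def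
  haveI : ProbabilityTheory.IsFiniteKernel kap := ⟨⟨Mr, ENNReal.coe_lt_top, fun a => hMr a⟩⟩
  -- the main integrand in time
  set G : ℝ → ℝ≥0∞ := fun s => ∫⁻ x, ENNReal.ofReal ((f x)^2 * Real.exp (-2 * n (c s) x))
      ∂(ν' s : Measure (EuclideanSpace ℝ (Fin d))) with hG_def
  have hGM : Measurable G := by
    have hu : Measurable (Function.uncurry
        (fun s x => ENNReal.ofReal ((f x)^2 * Real.exp (-2 * n (c s) x)))) := by
      have hcont : Continuous (fun p : ℝ × EuclideanSpace ℝ (Fin d) =>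
          Real.exp (-2 * n (c p.1) p.2)) := Real.continuous_exp.comp (continuous_const.mul hjoint)
      exact (((hf_meas.comp measurable_snd).pow_const 2).mul hcont.measurable).ennreal_ofReal
    exact Measurable.lintegral_kernel_prod_right (κ := kap) hu
  have hGb : ∀ s, G s ≤ (Mr : ℝ≥0∞) := by
    intro s
    have h1 : G s ≤ ∫⁻ _x, 1 ∂(ν' s : Measure (EuclideanSpace ℝ (Fin d))) := by
      apply lintegral_mono
      intro x
      apply ENNReal.ofReal_le_one.mpr
      have he : Real.exp (-2 * n (c s) x) ≤ 1 :=
        Real.exp_le_one_iff.mpr (by nlinarith [hn_nonneg (c s) x])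
      nlinarith [hf0 x, hf1 x, Real.exp_pos (-2 * n (c s) x), sq_nonneg (f x)]
    rw [lintegral_one] at h1
    exact le_trans h1 (hMr s)
  -- the target quantity and the error terms
  set Tgt : ℝ≥0∞ := ∫⁻ x, ENNReal.ofReal ((f x)^2 * (1 - Real.exp (-2 * n t x)) / 2)
    with hTgt_def
  set errf : ℕ → EuclideanSpace ℝ (Fin d) → ℝ := fun N x => ∑ i ∈ Finset.range N,
    (n (((i:ℝ)+1) * t / N) x - n ((i:ℝ) * t / N) x)^2 with herrf_def
  set EE : ℕ → ℝ≥0∞ := fun N => ∫⁻ x, ENNReal.ofReal (2 * errf N x) with hEE_def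
  -- the two-sided bound for every partition
  have hbound2 : ∀ N : ℕ, 1 ≤ N →
      (∫⁻ s in Set.Ioc (0:ℝ) t, G s) ≤ Tgt + EE N ∧
      Tgt ≤ (∫⁻ s in Set.Ioc (0:ℝ) t, G s) + EE N := by
    intro N hN
    set p : ℕ → ℝ := fun i => (i : ℝ) * t / N with hp_def
    have hNpos : (0:ℝ) < N := by exact_mod_cast hN
    have hp0 : p 0 = 0 := by simp [hp_def]
    have hpN : p N = t := by rw [hp_def]; field_simp
    have hpmono : ∀ i j : ℕ, i ≤ j → p i ≤ p j := by
      intro i j hij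
      have h1 : (i:ℝ) ≤ (j:ℝ) := by exact_mod_cast hij
      apply div_le_div_of_nonneg_right ?_ hNpos.le
      exact mul_le_mul_of_nonneg_right h1 ht.le
    have hpIcc : ∀ i : ℕ, i ≤ N → p i ∈ Set.Icc (0:ℝ) t := by
      intro i hi
      refine ⟨div_nonneg (mul_nonneg (Nat.cast_nonneg i) ht.le) hNpos.le, ?_⟩
      rw [← hpN]
      exact hpmono i N hi
    have hΔnn : ∀ i : ℕ, i < N → ∀ x, 0 ≤ n (p (i+1)) x - n (p i) x := by
      intro i hi x
      exact sub_nonneg.mpr (hmono_n (p i) (p (i+1)) (hpIcc i hi.le).1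
        (hpmono i (i+1) (Nat.le_succ i)) (hpIcc (i+1) hi).2 x)
    have hmeasg : ∀ a, 0 ≤ a → a ≤ t →
        Measurable (fun x => ENNReal.ofReal ((f x)^2 * Real.exp (-2 * n a x))) := by
      intro a h0 h1
      exact ((hf_meas.pow_const 2).mul
        (Real.continuous_exp.comp (continuous_const.mul (hnx' a h0 h1))).measurable).ennreal_ofReal
    -- upper bound on each time slice
    have hUB : ∀ i : ℕ, i < N → (∫⁻ s in Set.Ioc (p i) (p (i+1)), G s) ≤
        ∫⁻ x, ENNReal.ofReal (n (p (i+1)) x - n (p i) x)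
          * ENNReal.ofReal ((f x)^2 * Real.exp (-2 * n (p i) x)) := by
      intro i hi
      have hle : ∀ s ∈ Set.Ioc (p i) (p (i+1)), G s ≤
          ∫⁻ x, ENNReal.ofReal ((f x)^2 * Real.exp (-2 * n (p i) x))
            ∂(ν' s : Measure (EuclideanSpace ℝ (Fin d))) := by
        intro s hs
        apply lintegral_mono
        intro x
        apply ENNReal.ofReal_le_ofReal
        have hsIcc : s ∈ Set.Icc (0:ℝ) t :=
          ⟨le_trans (hpIcc i hi.le).1 hs.1.le, le_trans hs.2 (hpIcc (i+1) hi).2⟩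
        rw [hc_id s hsIcc]
        have hmn := hmono_n (p i) s (hpIcc i hi.le).1 hs.1.le hsIcc.2 x
        have hexp : Real.exp (-2 * n s x) ≤ Real.exp (-2 * n (p i) x) :=
          Real.exp_le_exp.mpr (by linarith)
        nlinarith [sq_nonneg (f x)]
      calc (∫⁻ s in Set.Ioc (p i) (p (i+1)), G s)
          ≤ ∫⁻ s in Set.Ioc (p i) (p (i+1)),
              (∫⁻ x, ENNReal.ofReal ((f x)^2 * Real.exp (-2 * n (p i) x))
                ∂(ν' s : Measure (EuclideanSpace ℝ (Fin d)))) :=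
            lintegral_mono_ae ((ae_restrict_iff' measurableSet_Ioc).mpr (ae_of_all _ hle))
        _ = _ := lemA (p i) (p (i+1)) (hpIcc i hi.le).1 (hpmono i (i+1) (Nat.le_succ i))
            (hpIcc (i+1) hi).2 _ (hmeasg (p i) (hpIcc i hi.le).1 (hpIcc i hi.le).2)
    -- lower bound on each time slice
    have hLB : ∀ i : ℕ, i < N →
        (∫⁻ x, ENNReal.ofReal (n (p (i+1)) x - n (p i) x)
          * ENNReal.ofReal ((f x)^2 * Real.exp (-2 * n (p (i+1)) x)))
        ≤ ∫⁻ s in Set.Ioc (p i) (p (i+1)), G s := by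
      intro i hi
      have hle : ∀ s ∈ Set.Ioc (p i) (p (i+1)),
          (∫⁻ x, ENNReal.ofReal ((f x)^2 * Real.exp (-2 * n (p (i+1)) x))
            ∂(ν' s : Measure (EuclideanSpace ℝ (Fin d)))) ≤ G s := by
        intro s hs
        apply lintegral_mono
        intro x
        apply ENNReal.ofReal_le_ofReal
        have hsIcc : s ∈ Set.Icc (0:ℝ) t :=
          ⟨le_trans (hpIcc i hi.le).1 hs.1.le, le_trans hs.2 (hpIcc (i+1) hi).2⟩
        rw [hc_id s hsIcc]
        have hmn := hmono_n s (p (i+1)) (le_trans (hpIcc i hi.le).1 hs.1.le) hs.2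
          (hpIcc (i+1) hi).2 x
        have hexp : Real.exp (-2 * n (p (i+1)) x) ≤ Real.exp (-2 * n s x) :=
          Real.exp_le_exp.mpr (by linarith)
        nlinarith [sq_nonneg (f x)]
      calc (∫⁻ x, ENNReal.ofReal (n (p (i+1)) x - n (p i) x)
            * ENNReal.ofReal ((f x)^2 * Real.exp (-2 * n (p (i+1)) x)))
          = ∫⁻ s in Set.Ioc (p i) (p (i+1)),
              (∫⁻ x, ENNReal.ofReal ((f x)^2 * Real.exp (-2 * n (p (i+1)) x))
                ∂(ν' s : Measure (EuclideanSpace ℝ (Fin d)))) :=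
            (lemA (p i) (p (i+1)) (hpIcc i hi.le).1 (hpmono i (i+1) (Nat.le_succ i))
              (hpIcc (i+1) hi).2 _ (hmeasg (p (i+1)) (hpIcc (i+1) hi).1 (hpIcc (i+1) hi).2)).symm
        _ ≤ ∫⁻ s in Set.Ioc (p i) (p (i+1)), G s :=
            lintegral_mono_ae ((ae_restrict_iff' measurableSet_Ioc).mpr (ae_of_all _ hle))
    -- lower piece is below the telescoping piece
    have hLD : ∀ i : ℕ, i < N →
        (∫⁻ x, ENNReal.ofReal (n (p (i+1)) x - n (p i) x)
          * ENNReal.ofReal ((f x)^2 * Real.exp (-2 * n (p (i+1)) x)))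
        ≤ ∫⁻ x, ENNReal.ofReal ((f x)^2
            * (Real.exp (-2 * n (p i) x) - Real.exp (-2 * n (p (i+1)) x)) / 2) := by
      intro i hi
      apply lintegral_mono
      intro x
      dsimp only
      rw [← ENNReal.ofReal_mul (hΔnn i hi x)]
      apply ENNReal.ofReal_le_ofReal
      have h1 := aux_exp1 (n (p i) x) (n (p (i+1)) x)
        (sub_nonneg.mp (hΔnn i hi x))
      nlinarith [sq_nonneg (f x)]
    -- telescoping piece is below the upper piece
    have hDU : ∀ i : ℕ, i < N →
        (∫⁻ x, ENNReal.ofReal ((f x)^2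
            * (Real.exp (-2 * n (p i) x) - Real.exp (-2 * n (p (i+1)) x)) / 2))
        ≤ ∫⁻ x, ENNReal.ofReal (n (p (i+1)) x - n (p i) x)
            * ENNReal.ofReal ((f x)^2 * Real.exp (-2 * n (p i) x)) := by
      intro i hi
      apply lintegral_mono
      intro x
      dsimp only
      rw [← ENNReal.ofReal_mul (hΔnn i hi x)]
      apply ENNReal.ofReal_le_ofReal
      have h1 := aux_exp2 (n (p i) x) (n (p (i+1)) x)
        (sub_nonneg.mp (hΔnn i hi x))
      nlinarith [sq_nonneg (f x)]
    -- upper piece is below lower piece plus error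
    have hUE : ∀ i : ℕ, i < N →
        (∫⁻ x, ENNReal.ofReal (n (p (i+1)) x - n (p i) x)
            * ENNReal.ofReal ((f x)^2 * Real.exp (-2 * n (p i) x)))
        ≤ (∫⁻ x, ENNReal.ofReal (n (p (i+1)) x - n (p i) x)
            * ENNReal.ofReal ((f x)^2 * Real.exp (-2 * n (p (i+1)) x)))
          + ∫⁻ x, ENNReal.ofReal (2 * (n (p (i+1)) x - n (p i) x)^2) := by
      intro i hi
      have hmeasL : Measurable (fun x => ENNReal.ofReal (n (p (i+1)) x - n (p i) x)
          * ENNReal.ofReal ((f x)^2 * Real.exp (-2 * n (p (i+1)) x))) := by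
        apply Measurable.fun_mul
        · exact (((hnx' (p (i+1)) (hpIcc (i+1) hi).1 (hpIcc (i+1) hi).2).sub
            (hnx' (p i) (hpIcc i hi.le).1 (hpIcc i hi.le).2)).measurable).ennreal_ofReal
        · exact hmeasg (p (i+1)) (hpIcc (i+1) hi).1 (hpIcc (i+1) hi).2
      calc (∫⁻ x, ENNReal.ofReal (n (p (i+1)) x - n (p i) x)
            * ENNReal.ofReal ((f x)^2 * Real.exp (-2 * n (p i) x)))
          ≤ ∫⁻ x, (ENNReal.ofReal (n (p (i+1)) x - n (p i) x)
              * ENNReal.ofReal ((f x)^2 * Real.exp (-2 * n (p (i+1)) x))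
            + ENNReal.ofReal (2 * (n (p (i+1)) x - n (p i) x)^2)) := by
            apply lintegral_mono
            intro x
            dsimp only
            rw [← ENNReal.ofReal_mul (hΔnn i hi x), ← ENNReal.ofReal_mul (hΔnn i hi x)]
            refine le_trans (ENNReal.ofReal_le_ofReal ?_) (ENNReal.ofReal_add_le)
            have h3 := aux_exp3 (n (p i) x) (n (p (i+1)) x)
              (hn_nonneg (p i) x) (sub_nonneg.mp (hΔnn i hi x))
            have hf2 : (f x)^2 ≤ 1 := by nlinarith [hf0 x, hf1 x]
            have hexp : Real.exp (-2 * n (p (i+1)) x) ≤ Real.exp (-2 * n (p i) x) :=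
              Real.exp_le_exp.mpr (by nlinarith [hΔnn i hi x])
            have hd : (0:ℝ) ≤ Real.exp (-2 * n (p i) x) - Real.exp (-2 * n (p (i+1)) x) :=
              sub_nonneg.mpr hexp
            have e1 : (n (p (i+1)) x - n (p i) x) * ((f x)^2
                  * (Real.exp (-2 * n (p i) x) - Real.exp (-2 * n (p (i+1)) x)))
                ≤ (n (p (i+1)) x - n (p i) x)
                  * (Real.exp (-2 * n (p i) x) - Real.exp (-2 * n (p (i+1)) x)) :=
              mul_le_mul_of_nonneg_left (by nlinarith [sq_nonneg (f x)]) (hΔnn i hi x)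
            have e2 : (n (p (i+1)) x - n (p i) x)
                  * (Real.exp (-2 * n (p i) x) - Real.exp (-2 * n (p (i+1)) x))
                ≤ (n (p (i+1)) x - n (p i) x) * (2 * (n (p (i+1)) x - n (p i) x)) :=
              mul_le_mul_of_nonneg_left h3 (hΔnn i hi x)
            nlinarith [e1, e2]
        _ = _ := lintegral_add_left hmeasL _
    -- splitting the full time integral
    have hsplit : (∫⁻ s in Set.Ioc (0:ℝ) t, G s)
        = ∑ i ∈ Finset.range N, ∫⁻ s in Set.Ioc (p i) (p (i+1)), G s := by
      have hgen : ∀ m : ℕ, (∫⁻ s in Set.Ioc (p 0) (p m), G s)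
          = ∑ i ∈ Finset.range m, ∫⁻ s in Set.Ioc (p i) (p (i+1)), G s := by
        intro m
        induction m with
        | zero => simp
        | succ k ih =>
            rw [Finset.sum_range_succ, ← ih,
              ← Set.Ioc_union_Ioc_eq_Ioc (hpmono 0 k (Nat.zero_le k))
                (hpmono k (k+1) (Nat.le_succ k)),
              lintegral_union measurableSet_Ioc (Set.Ioc_disjoint_Ioc_of_le le_rfl)]
      have := hgen N
      rwa [hp0, hpN] at this
    -- summing the telescoping pieces
    have hDsum : (∑ i ∈ Finset.range N, ∫⁻ x, ENNReal.ofReal ((f x)^2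
          * (Real.exp (-2 * n (p i) x) - Real.exp (-2 * n (p (i+1)) x)) / 2)) = Tgt := by
      rw [← lintegral_finset_sum]
      · rw [hTgt_def]
        apply lintegral_congr
        intro x
        rw [← ENNReal.ofReal_sum_of_nonneg]
        · congr 1
          have hterm : ∀ i ∈ Finset.range N, (f x)^2
              * (Real.exp (-2 * n (p i) x) - Real.exp (-2 * n (p (i+1)) x)) / 2
              = (f x)^2 / 2 * (Real.exp (-2 * n (p i) x) - Real.exp (-2 * n (p (i+1)) x)) := by
            intro i _
            ring
          rw [Finset.sum_congr rfl hterm, ← Finset.mul_sum,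
            Finset.sum_range_sub' (f := fun i => Real.exp (-2 * n (p i) x)), hp0, hpN,
            hn0 x]
          simp [Real.exp_zero]
          ring
        · intro i hi
          rw [Finset.mem_range] at hi
          have hmn := hmono_n (p i) (p (i+1)) (hpIcc i hi.le).1
            (hpmono i (i+1) (Nat.le_succ i)) (hpIcc (i+1) hi).2 x
          have hexp : Real.exp (-2 * n (p (i+1)) x) ≤ Real.exp (-2 * n (p i) x) :=
            Real.exp_le_exp.mpr (by linarith)
          nlinarith [sq_nonneg (f x)]
      · intro i hi
        rw [Finset.mem_range] at hi
        apply Measurable.ennreal_ofReal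
        apply Measurable.div_const
        apply Measurable.mul (hf_meas.pow_const 2)
        exact ((Real.continuous_exp.comp (continuous_const.mul
            (hnx' (p i) (hpIcc i hi.le).1 (hpIcc i hi.le).2))).measurable).sub
          ((Real.continuous_exp.comp (continuous_const.mul
            (hnx' (p (i+1)) (hpIcc (i+1) hi).1 (hpIcc (i+1) hi).2))).measurable)
    -- summing the error pieces
    have hEsum : (∑ i ∈ Finset.range N,
          ∫⁻ x, ENNReal.ofReal (2 * (n (p (i+1)) x - n (p i) x)^2)) = EE N := by
      rw [← lintegral_finset_sum]
      · rw [hEE_def]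
        apply lintegral_congr
        intro x
        rw [← ENNReal.ofReal_sum_of_nonneg (fun i _ => by positivity)]
        congr 1
        rw [herrf_def, Finset.mul_sum]
        apply Finset.sum_congr rfl
        intro i _
        have hcast1 : p i = (i:ℝ) * t / N := rfl
        have hcast : p (i+1) = ((i:ℝ)+1) * t / N := by
          show ((i+1 : ℕ) : ℝ) * t / N = _
          push_cast
          ring
        rw [hcast, hcast1]
      · intro i hi
        rw [Finset.mem_range] at hi
        apply Measurable.ennreal_ofReal
        apply Measurable.const_mul
        exact (((hnx' (p (i+1)) (hpIcc (i+1) hi).1 (hpIcc (i+1) hi).2).sub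
          (hnx' (p i) (hpIcc i hi.le).1 (hpIcc i hi.le).2)).measurable).pow_const 2
    constructor
    · calc (∫⁻ s in Set.Ioc (0:ℝ) t, G s)
          = ∑ i ∈ Finset.range N, ∫⁻ s in Set.Ioc (p i) (p (i+1)), G s := hsplit
        _ ≤ ∑ i ∈ Finset.range N,
              ((∫⁻ x, ENNReal.ofReal ((f x)^2
                * (Real.exp (-2 * n (p i) x) - Real.exp (-2 * n (p (i+1)) x)) / 2))
              + ∫⁻ x, ENNReal.ofReal (2 * (n (p (i+1)) x - n (p i) x)^2)) := by
            apply Finset.sum_le_sum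
            intro i hi
            rw [Finset.mem_range] at hi
            exact le_trans (hUB i hi) (le_trans (hUE i hi)
              (add_le_add_left (hLD i hi) _))
        _ = Tgt + EE N := by rw [Finset.sum_add_distrib, hDsum, hEsum]
    · calc Tgt
          = ∑ i ∈ Finset.range N, ∫⁻ x, ENNReal.ofReal ((f x)^2
              * (Real.exp (-2 * n (p i) x) - Real.exp (-2 * n (p (i+1)) x)) / 2) := hDsum.symm
        _ ≤ ∑ i ∈ Finset.range N,
              ((∫⁻ s in Set.Ioc (p i) (p (i+1)), G s)
              + ∫⁻ x, ENNReal.ofReal (2 * (n (p (i+1)) x - n (p i) x)^2)) := by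
            apply Finset.sum_le_sum
            intro i hi
            rw [Finset.mem_range] at hi
            exact le_trans (hDU i hi) (le_trans (hUE i hi)
              (add_le_add_left (hLB i hi) _))
        _ = (∫⁻ s in Set.Ioc (0:ℝ) t, G s) + EE N := by
            rw [Finset.sum_add_distrib, ← hsplit, hEsum]
  -- the error terms tend to zero
  have herr_tend : ∀ x, Tendsto (fun N => errf N x) atTop (𝓝 0) := by
    intro x
    rw [Metric.tendsto_atTop]
    intro ε hε
    have hcx : ContinuousOn (fun s => n s x) (Set.Icc 0 t) := by
      have hmap : Set.MapsTo (fun s : ℝ => (s, x)) (Set.Icc 0 t) (Set.Icc 0 t ×ˢ Set.univ) :=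
        fun s hs => Set.mk_mem_prod hs trivial
      exact hn_cont.comp (Continuous.continuousOn (continuous_id.prodMk continuous_const)) hmap
    have hunif := isCompact_Icc.uniformContinuousOn_of_continuous hcx
    rw [Metric.uniformContinuousOn_iff] at hunif
    obtain ⟨δ, hδ, hδu⟩ := hunif (ε / (K+1)) (by positivity)
    obtain ⟨N₀, hN₀⟩ := exists_nat_gt (t / δ)
    refine ⟨max N₀ 1, fun N hN => ?_⟩
    have hN1 : 1 ≤ N := le_trans (le_max_right _ _) hN
    have hNpos : (0:ℝ) < N := by exact_mod_cast hN1
    have hN₀pos : (0:ℝ) < N₀ := lt_of_le_of_lt (div_nonneg ht.le hδ.le) hN₀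
    have hmesh : t / N < δ := by
      have hN₀N : (N₀:ℝ) ≤ N := by exact_mod_cast le_trans (le_max_left _ _) hN
      have h1 : t / (N:ℝ) ≤ t / N₀ := div_le_div_of_nonneg_left ht.le hN₀pos hN₀N
      have h2 : t < N₀ * δ := by
        have := (div_lt_iff₀ hδ).mp hN₀
        linarith [this]
      have h3 : t / (N₀:ℝ) < δ := (div_lt_iff₀ hN₀pos).mpr (by linarith)
      linarith
    have hmem : ∀ j : ℕ, (j:ℝ) ≤ N → ((j:ℝ) * t / N) ∈ Set.Icc (0:ℝ) t := by
      intro j hj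
      refine ⟨div_nonneg (mul_nonneg (Nat.cast_nonneg j) ht.le) hNpos.le, ?_⟩
      rw [div_le_iff₀ hNpos]
      nlinarith
    have herr_nn : 0 ≤ errf N x := Finset.sum_nonneg (fun i _ => sq_nonneg _)
    rw [Real.dist_eq, sub_zero, abs_of_nonneg herr_nn]
    have hmemi : ∀ i : ℕ, i < N → ((i:ℝ) * t / N) ∈ Set.Icc (0:ℝ) t ∧
        (((i:ℝ)+1) * t / N) ∈ Set.Icc (0:ℝ) t := by
      intro i hi
      constructor
      · exact hmem i (by exact_mod_cast hi.le)
      · have : ((i:ℝ)+1) = ((i+1 : ℕ) : ℝ) := by push_cast; ring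
        rw [this]
        exact hmem (i+1) (by exact_mod_cast hi)
    have hterm : ∀ i ∈ Finset.range N,
        (n (((i:ℝ)+1) * t / N) x - n ((i:ℝ) * t / N) x)^2
        ≤ (ε/(K+1)) * (n (((i:ℝ)+1) * t / N) x - n ((i:ℝ) * t / N) x) := by
      intro i hi
      rw [Finset.mem_range] at hi
      obtain ⟨hma, hmb⟩ := hmemi i hi
      have hab : ((i:ℝ) * t / N) ≤ (((i:ℝ)+1) * t / N) := by
        apply div_le_div_of_nonneg_right ?_ hNpos.le
        nlinarith
      have hΔnn2 : 0 ≤ n (((i:ℝ)+1) * t / N) x - n ((i:ℝ) * t / N) x :=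
        sub_nonneg.mpr (hmono_n _ _ hma.1 hab hmb.2 x)
      have hd : dist (((i:ℝ)+1) * t / N) ((i:ℝ) * t / N) < δ := by
        rw [Real.dist_eq]
        have heq : (((i:ℝ)+1) * t / N) - ((i:ℝ) * t / N) = t / N := by ring
        rw [heq, abs_of_nonneg (div_nonneg ht.le hNpos.le)]
        exact hmesh
      have hdist := hδu _ hmb _ hma hd
      rw [Real.dist_eq] at hdist
      have hlt : n (((i:ℝ)+1) * t / N) x - n ((i:ℝ) * t / N) x < ε/(K+1) :=
        lt_of_le_of_lt (le_abs_self _) hdist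
      nlinarith
    have hsum_eq : (∑ i ∈ Finset.range N,
        (n (((i:ℝ)+1) * t / N) x - n ((i:ℝ) * t / N) x)) = n t x := by
      have h := Finset.sum_range_sub (f := fun j : ℕ => n ((j:ℝ) * t / N) x) (n := N)
      push_cast at h
      have hNt : (N:ℝ) * t / (N:ℝ) = t := by field_simp
      simp only [zero_mul, zero_div, hNt, hn0 x, sub_zero] at h
      exact h
    calc errf N x ≤ ∑ i ∈ Finset.range N,
          (ε/(K+1)) * (n (((i:ℝ)+1) * t / N) x - n ((i:ℝ) * t / N) x) := by
          rw [herrf_def]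
          exact Finset.sum_le_sum hterm
      _ = (ε/(K+1)) * ∑ i ∈ Finset.range N,
          (n (((i:ℝ)+1) * t / N) x - n ((i:ℝ) * t / N) x) := by rw [Finset.mul_sum]
      _ = (ε/(K+1)) * n t x := by rw [hsum_eq]
      _ ≤ (ε/(K+1)) * K := mul_le_mul_of_nonneg_left (hK t x) (by positivity)
      _ < ε := by
          rw [div_mul_eq_mul_div]
          rw [div_lt_iff₀ (by linarith)]
          nlinarith
  have hEE0 : Tendsto EE atTop (𝓝 0) := by
    have hmeaserr : ∀ N : ℕ, Measurable (fun x => ENNReal.ofReal (2 * errf N x)) := by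
      intro N
      apply Measurable.ennreal_ofReal
      apply Measurable.const_mul
      rw [herrf_def]
      apply Finset.measurable_sum
      intro i hi
      rw [Finset.mem_range] at hi
      have hNpos : (0:ℝ) < N := by
        have h' : 0 < N := by omega
        exact_mod_cast h'
      have hmem : ∀ j : ℕ, (j:ℝ) ≤ N → ((j:ℝ) * t / N) ∈ Set.Icc (0:ℝ) t := by
        intro j hj
        refine ⟨div_nonneg (mul_nonneg (Nat.cast_nonneg j) ht.le) hNpos.le, ?_⟩
        rw [div_le_iff₀ hNpos]
        nlinarith
      have hma := hmem i (by exact_mod_cast hi.le)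
      have hmb : (((i:ℝ)+1) * t / N) ∈ Set.Icc (0:ℝ) t := by
        have : ((i:ℝ)+1) = ((i+1 : ℕ) : ℝ) := by push_cast; ring
        rw [this]
        exact hmem (i+1) (by exact_mod_cast hi)
      exact (((hnx' _ hmb.1 hmb.2).sub (hnx' _ hma.1 hma.2)).measurable).pow_const 2
    have hdom : ∀ N : ℕ, (fun x => ENNReal.ofReal (2 * errf N x))
        ≤ᵐ[volume] (fun x => ENNReal.ofReal ((2*K) * n t x)) := by
      intro N
      apply ae_of_all
      intro x
      apply ENNReal.ofReal_le_ofReal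
      have herr_le : errf N x ≤ K * n t x := by
        rcases Nat.eq_zero_or_pos N with h0 | hpos
        · subst h0
          have h00 : errf 0 x = 0 := by rw [herrf_def]; simp
          rw [h00]
          exact mul_nonneg hK0 (hn_nonneg t x)
        have hNpos : (0:ℝ) < N := by exact_mod_cast hpos
        have hmem : ∀ j : ℕ, (j:ℝ) ≤ N → ((j:ℝ) * t / N) ∈ Set.Icc (0:ℝ) t := by
          intro j hj
          refine ⟨div_nonneg (mul_nonneg (Nat.cast_nonneg j) ht.le) hNpos.le, ?_⟩
          rw [div_le_iff₀ hNpos]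
          nlinarith
        have hterm : ∀ i ∈ Finset.range N,
            (n (((i:ℝ)+1) * t / N) x - n ((i:ℝ) * t / N) x)^2
            ≤ (n t x) * (n (((i:ℝ)+1) * t / N) x - n ((i:ℝ) * t / N) x) := by
          intro i hi
          rw [Finset.mem_range] at hi
          have hma := hmem i (by exact_mod_cast hi.le)
          have hmb : (((i:ℝ)+1) * t / N) ∈ Set.Icc (0:ℝ) t := by
            have : ((i:ℝ)+1) = ((i+1 : ℕ) : ℝ) := by push_cast; ring
            rw [this]
            exact hmem (i+1) (by exact_mod_cast hi)
          have hab : ((i:ℝ) * t / N) ≤ (((i:ℝ)+1) * t / N) := by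
            apply div_le_div_of_nonneg_right ?_ hNpos.le
            nlinarith
          have hΔnn2 : 0 ≤ n (((i:ℝ)+1) * t / N) x - n ((i:ℝ) * t / N) x :=
            sub_nonneg.mpr (hmono_n _ _ hma.1 hab hmb.2 x)
          have hup : n (((i:ℝ)+1) * t / N) x ≤ n t x := hmono_n _ t hmb.1 hmb.2 le_rfl x
          have hlo : 0 ≤ n ((i:ℝ) * t / N) x := hn_nonneg _ x
          nlinarith
        have hsum_eq : (∑ i ∈ Finset.range N,
            (n (((i:ℝ)+1) * t / N) x - n ((i:ℝ) * t / N) x)) = n t x := by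
          have h := Finset.sum_range_sub (f := fun j : ℕ => n ((j:ℝ) * t / N) x) (n := N)
          push_cast at h
          have hNt : (N:ℝ) * t / (N:ℝ) = t := by field_simp
          simp only [zero_mul, zero_div, hNt, hn0 x, sub_zero] at h
          exact h
        calc errf N x ≤ ∑ i ∈ Finset.range N,
              (n t x) * (n (((i:ℝ)+1) * t / N) x - n ((i:ℝ) * t / N) x) := by
              rw [herrf_def]
              exact Finset.sum_le_sum hterm
          _ = (n t x) * ∑ i ∈ Finset.range N,
              (n (((i:ℝ)+1) * t / N) x - n ((i:ℝ) * t / N) x) := by rw [Finset.mul_sum]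
          _ = (n t x) * n t x := by rw [hsum_eq]
          _ ≤ K * n t x := by nlinarith [hK t x, hn_nonneg t x]
      nlinarith [hn_nonneg t x]
    have hfin : (∫⁻ x, ENNReal.ofReal ((2*K) * n t x)) ≠ ⊤ := by
      have heq : ∀ x : EuclideanSpace ℝ (Fin d),
          ENNReal.ofReal ((2*K) * n t x) = ENNReal.ofReal (2*K) * ENNReal.ofReal (n t x) :=
        fun x => ENNReal.ofReal_mul (by positivity)
      rw [lintegral_congr heq, lintegral_const_mul _ ((hnx' t ht.le le_rfl).measurable.ennreal_ofReal)]
      exact ENNReal.mul_ne_top ENNReal.ofReal_ne_top (hn_lt t ht.le le_rfl).ne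
    have hlim : ∀ᵐ x ∂(volume : Measure (EuclideanSpace ℝ (Fin d))),
        Tendsto (fun N => ENNReal.ofReal (2 * errf N x)) atTop (𝓝 0) := by
      apply ae_of_all
      intro x
      have h1 : Tendsto (fun N => 2 * errf N x) atTop (𝓝 (2 * 0)) :=
        (herr_tend x).const_mul 2
      rw [mul_zero] at h1
      have h2 := (ENNReal.continuous_ofReal.tendsto 0).comp h1
      rw [ENNReal.ofReal_zero] at h2
      exact h2
    have := tendsto_lintegral_of_dominated_convergence
      (F := fun N x => ENNReal.ofReal (2 * errf N x)) (f := fun _ => 0)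
      (bound := fun x => ENNReal.ofReal ((2*K) * n t x)) hmeaserr hdom hfin hlim
    simpa [hEE_def] using this
  -- the exact identity in ℝ≥0∞
  have hmain : (∫⁻ s in Set.Ioc (0:ℝ) t, G s) = Tgt := by
    have h1 : (∫⁻ s in Set.Ioc (0:ℝ) t, G s) ≤ Tgt := by
      have hlim : Tendsto (fun N => Tgt + EE N) atTop (𝓝 Tgt) := by
        have := Tendsto.const_add Tgt hEE0
        simpa using this
      refine ge_of_tendsto hlim ?_
      filter_upwards [eventually_ge_atTop 1] with N hN
      exact (hbound2 N hN).1
    have h2 : Tgt ≤ ∫⁻ s in Set.Ioc (0:ℝ) t, G s := by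
      have hlim : Tendsto (fun N => (∫⁻ s in Set.Ioc (0:ℝ) t, G s) + EE N) atTop
          (𝓝 (∫⁻ s in Set.Ioc (0:ℝ) t, G s)) := by
        have := Tendsto.const_add (∫⁻ s in Set.Ioc (0:ℝ) t, G s) hEE0
        simpa using this
      refine ge_of_tendsto hlim ?_
      filter_upwards [eventually_ge_atTop 1] with N hN
      exact (hbound2 N hN).2
    exact le_antisymm h1 h2
  -- conversion of the left-hand side
  have hL1 : (∫ s in (0:ℝ)..t,
        ∫ x, (f x)^2 * Real.exp (-2 * n s x) ∂(ν s : Measure (EuclideanSpace ℝ (Fin d))))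
      = (∫⁻ s in Set.Ioc (0:ℝ) t, G s).toReal := by
    rw [intervalIntegral.integral_of_le ht.le]
    have hcongr : Set.EqOn
        (fun s => ∫ x, (f x)^2 * Real.exp (-2 * n s x)
          ∂(ν s : Measure (EuclideanSpace ℝ (Fin d))))
        (fun s => (G s).toReal) (Set.Ioc 0 t) := by
      intro s hs
      have hsIcc : s ∈ Set.Icc (0:ℝ) t := ⟨hs.1.le, hs.2⟩
      have hms : (ν s : Measure (EuclideanSpace ℝ (Fin d)))
          = (ν' s : Measure (EuclideanSpace ℝ (Fin d))) := by
        rw [hν'_def]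
        simp [hc_id s hsIcc]
      dsimp only
      rw [hms]
      have hnnae : 0 ≤ᵐ[(ν' s : Measure (EuclideanSpace ℝ (Fin d)))]
          (fun x => (f x)^2 * Real.exp (-2 * n s x)) :=
        ae_of_all _ (fun x => by positivity)
      have hsm : AEStronglyMeasurable (fun x => (f x)^2 * Real.exp (-2 * n s x))
          (ν' s : Measure (EuclideanSpace ℝ (Fin d))) :=
        ((hf_meas.pow_const 2).mul
          (Real.continuous_exp.comp
            (continuous_const.mul (hnx' s hsIcc.1 hsIcc.2))).measurable).aestronglyMeasurable
      rw [integral_eq_lintegral_of_nonneg_ae hnnae hsm]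
      rw [hG_def]
      congr 1
      apply lintegral_congr
      intro x
      rw [hc_id s hsIcc]
    rw [setIntegral_congr_fun measurableSet_Ioc hcongr]
    rw [integral_toReal (hGM.aemeasurable.restrict)
      (ae_of_all _ (fun s => lt_of_le_of_lt (hGb s) ENNReal.coe_lt_top))]
  -- conversion of the right-hand side
  have hq_nonneg : ∀ x, 0 ≤ (f x)^2 * (1 - Real.exp (-2 * n t x)) := by
    intro x
    have he : Real.exp (-2 * n t x) ≤ 1 :=
      Real.exp_le_one_iff.mpr (by nlinarith [hn_nonneg t x])
    nlinarith [sq_nonneg (f x)]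
  have hq_meas : Measurable (fun x => (f x)^2 * (1 - Real.exp (-2 * n t x))) := by
    apply (hf_meas.pow_const 2).mul
    exact (measurable_const.sub
      (Real.continuous_exp.comp (continuous_const.mul (hnx' t ht.le le_rfl))).measurable)
  have hq_int : Integrable (fun x => (f x)^2 * (1 - Real.exp (-2 * n t x))) volume := by
    apply Integrable.mono' ((hn_int t ht.le le_rfl).const_mul 2)
      hq_meas.aestronglyMeasurable
    apply ae_of_all
    intro x
    rw [Real.norm_eq_abs, abs_of_nonneg (hq_nonneg x)]
    have h3 := aux_exp3 0 (n t x) le_rfl (hn_nonneg t x)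
    simp only [neg_zero, mul_zero, Real.exp_zero] at h3
    have hf2 : (f x)^2 ≤ 1 := by nlinarith [hf0 x, hf1 x]
    have he : Real.exp (-2 * n t x) ≤ 1 :=
      Real.exp_le_one_iff.mpr (by nlinarith [hn_nonneg t x])
    nlinarith [sq_nonneg (f x), hq_nonneg x]
  have hR2 : Tgt.toReal = (1/2) * ∫ x, (f x)^2 * (1 - Real.exp (-2 * n t x)) := by
    have hR1 : Tgt = ENNReal.ofReal (∫ x, (f x)^2 * (1 - Real.exp (-2 * n t x)) / 2) := by
      rw [hTgt_def]
      rw [← ofReal_integral_eq_lintegral_ofReal (hq_int.div_const 2)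
        (ae_of_all _ (fun x => div_nonneg (hq_nonneg x) two_pos.le))]
    rw [hR1, ENNReal.toReal_ofReal
      (integral_nonneg (fun x => div_nonneg (hq_nonneg x) two_pos.le))]
    rw [integral_div]
    ring
  have hfinal : (∫ s in (0:ℝ)..t,
        ∫ x, (f x)^2 * Real.exp (-2 * n s x) ∂(ν s : Measure (EuclideanSpace ℝ (Fin d))))
      = (1/2) * ∫ x, (f x)^2 * (1 - Real.exp (-2 * n t x)) := by
    rw [hL1, hmain, hR2]
  refine ⟨hfinal, ?_⟩
  intro hsupp
  rw [hfinal]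
  have hsupp_meas : MeasurableSet (Function.support f) := by
    have : Function.support f = f ⁻¹' {0}ᶜ := by
      ext x
      simp [Function.mem_support]
    rw [this]
    exact hf_meas (measurableSet_singleton 0).compl
  have hvol_fin : volume (Function.support f) < ⊤ := by
    obtain ⟨R, hR⟩ := hsupp.subset_closedBall (0 : EuclideanSpace ℝ (Fin d))
    exact lt_of_le_of_lt (measure_mono hR) measure_closedBall_lt_top
  have hle : (∫ x, (f x)^2 * (1 - Real.exp (-2 * n t x)))
      ≤ (volume (Function.support f)).toReal := by
    have hind : ∀ x, (f x)^2 * (1 - Real.exp (-2 * n t x))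
        ≤ Set.indicator (Function.support f) (fun _ => (1:ℝ)) x := by
      intro x
      by_cases hx : x ∈ Function.support f
      · rw [Set.indicator_of_mem hx]
        have hf2 : (f x)^2 ≤ 1 := by nlinarith [hf0 x, hf1 x]
        have he : (0:ℝ) < Real.exp (-2 * n t x) := Real.exp_pos _
        nlinarith [sq_nonneg (f x)]
      · rw [Set.indicator_of_notMem hx]
        have hfx : f x = 0 := Function.notMem_support.mp hx
        rw [hfx]
        ring_nf
        exact le_rfl
    have hint_ind : Integrable (Set.indicator (Function.support f) (fun _ => (1:ℝ))) volume := by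
      rw [integrable_indicator_iff hsupp_meas]
      exact integrableOn_const hvol_fin.ne
    calc (∫ x, (f x)^2 * (1 - Real.exp (-2 * n t x)))
        ≤ ∫ x, Set.indicator (Function.support f) (fun _ => (1:ℝ)) x :=
          integral_mono hq_int hint_ind hind
      _ = (volume (Function.support f)).toReal := by
          rw [integral_indicator hsupp_meas]
          simp [setIntegral_const, measureReal_def]
  linarith
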